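/- Let (𝔤, ω) be a symplectic Lie algebra, with q(x) := ω(x,·), r := q⁻¹, product xy on 𝔤 defined by ω(xy,z) = -ω(y,[x,z]), left symmetric product on 𝔤* given by αβ := ad*_{r(α)}β, dual Lie bracket [α,β]_q := q([r(α),r(β)]), and coadjoint action of (𝔤*,[·,·]_q) on 𝔤 defined by ⟨β, ad*_α x⟩ := -⟨[α,β]_q, x⟩. Then the product on 𝒟 := 𝔤 × 𝔤* defined by (x,α)(y,β) := (xy + ad*_α y, αβ + ad*_x β) is left symmetric, and its commutator equals the double Lie bracket [(x,α),(y,β)] = ([x,y] + ad*_α y - ad*_β x, [α,β]_q + ad*_x β - ad*_y α). -/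
import Mathlib


/-- The coadjoint action of `x : L` on the dual: `⟨coad x α, y⟩ = -⟨α, [x,y]⟩`. -/
noncomputable def coad {L : Type*} [LieRing L] [LieAlgebra ℝ L]
    (x : L) (α : Module.Dual ℝ L) : Module.Dual ℝ L :=
  -(α ∘ₗ (LieAlgebra.ad ℝ L x))

/-- The product `(x,α)(y,β) = (xy + ad*_α y, αβ + ad*_x β)` on `𝒟 = 𝔤 × 𝔤*`, where
`αβ := ad*_{r α} β` and `cstar` is the coadjoint action of `𝔤*` on `𝔤`. -/
noncomputable def dprod {L : Type*} [LieRing L] [LieAlgebra ℝ L]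
    (p : L →ₗ[ℝ] L →ₗ[ℝ] L) (r : Module.Dual ℝ L →ₗ[ℝ] L)
    (cstar : Module.Dual ℝ L → L → L)
    (u v : L × Module.Dual ℝ L) : L × Module.Dual ℝ L :=
  (p u.1 v.1 + cstar u.2 v.1, coad (r u.2) v.2 + coad u.1 v.2)

/-- for a symplectic Lie algebra `(𝔤, ω)`, the product
`(x,α)(y,β) = (xy + ad*_α y, αβ + ad*_x β)` on `𝒟 = 𝔤 × 𝔤*` is left symmetric and its
commutator is the double Lie bracket. -/
theorem stmt12 {L : Type*} [LieRing L] [LieAlgebra ℝ L] [FiniteDimensional ℝ L]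
    (ω : L →ₗ[ℝ] Module.Dual ℝ L)
    (hskew : ∀ x y : L, ω x y = - ω y x)
    (hclosed : ∀ x y z : L, ω ⁅x, y⁆ z + ω ⁅y, z⁆ x + ω ⁅z, x⁆ y = 0)
    (r : Module.Dual ℝ L →ₗ[ℝ] L)
    (hr1 : ∀ α : Module.Dual ℝ L, ω (r α) = α)
    (hr2 : ∀ x : L, r (ω x) = x)
    (p : L →ₗ[ℝ] L →ₗ[ℝ] L)
    (hp : ∀ x y z : L, ω (p x y) z = -(ω y ⁅x, z⁆))
    (cstar : Module.Dual ℝ L → L → L)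
    (hcstar : ∀ (α : Module.Dual ℝ L) (x : L) (β : Module.Dual ℝ L),
      β (cstar α x) = -((ω ⁅r α, r β⁆) x)) :
    (∀ u v w : L × Module.Dual ℝ L,
      dprod p r cstar (dprod p r cstar u v) w - dprod p r cstar u (dprod p r cstar v w)
        = dprod p r cstar (dprod p r cstar v u) w
          - dprod p r cstar v (dprod p r cstar u w)) ∧
    (∀ u v : L × Module.Dual ℝ L,
      dprod p r cstar u v - dprod p r cstar v u
        = (⁅u.1, v.1⁆ + cstar u.2 v.1 - cstar v.2 u.1,
           ω ⁅r u.2, r v.2⁆ + coad u.1 v.2 - coad v.1 u.2)) := by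
  -- injectivity of ω via pointwise values
  have winj : ∀ u v : L, (∀ w, ω u w = ω v w) → u = v := by
    intro u v h
    have : ω u = ω v := LinearMap.ext h
    rw [← hr2 u, this, hr2 v]
  -- key consequence of closedness + skewness
  have key : ∀ x y z : L, ω ⁅x, y⁆ z = ω x ⁅y, z⁆ - ω y ⁅x, z⁆ := by
    intro x y z
    have h1 := hclosed x y z
    have h2 : ω ⁅y, z⁆ x = - ω x ⁅y, z⁆ := hskew _ _
    have h3 : ω ⁅z, x⁆ y = ω y ⁅x, z⁆ := by
      rw [show (⁅z, x⁆ : L) = -⁅x, z⁆ from (lie_skew z x).symm, map_neg,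
        LinearMap.neg_apply, hskew, neg_neg]
    linarith
  -- commutator of p is the bracket
  have comm : ∀ x y : L, p x y - p y x = ⁅x, y⁆ := by
    intro x y
    apply winj
    intro w
    rw [map_sub, LinearMap.sub_apply, hp, hp, key]
    ring
  -- p is left symmetric
  have lsa : ∀ x y z : L, p (p x y) z - p x (p y z) = p (p y x) z - p y (p x z) := by
    intro x y z
    apply winj
    intro w
    have hxy : p x y = p y x + ⁅x, y⁆ := by rw [← comm x y]; abel
    simp only [map_sub, LinearMap.sub_apply, hp, hxy, add_lie, map_add,
      LinearMap.add_apply]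
    have hj : ⁅x, ⁅y, w⁆⁆ = ⁅⁅x, y⁆, w⁆ + ⁅y, ⁅x, w⁆⁆ := leibniz_lie x y w
    rw [hj, map_add]
    ring
  -- cstar in terms of p
  have hc : ∀ (α : Module.Dual ℝ L) (y : L), cstar α y = p (r α) y := by
    intro α y
    apply winj
    intro w
    have h1 := hcstar α y (ω w)
    rw [hr2] at h1
    rw [hskew (cstar α y) w, h1, hp, hskew y]
  -- coad in terms of p
  have hco : ∀ (x : L) (β : Module.Dual ℝ L), coad x β = ω (p x (r β)) := by
    intro x β
    ext z
    simp only [coad, LinearMap.neg_apply, LinearMap.comp_apply, LieAlgebra.ad_apply]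
    rw [hp, hr1]
  -- normal form for dprod
  have hd : ∀ (x y : L) (α β : Module.Dual ℝ L),
      dprod p r cstar (x, α) (y, β) = (p (x + r α) y, ω (p (x + r α) (r β))) := by
    intro x y α β
    simp only [dprod, hc, hco, map_add, LinearMap.add_apply]
    rw [Prod.mk.injEq]
    exact ⟨rfl, add_comm _ _⟩
  constructor
  · intro u v w
    obtain ⟨x, α⟩ := u
    obtain ⟨y, β⟩ := v
    obtain ⟨z, γ⟩ := w
    simp only [hd, hr2]
    rw [show p (x + r α) y + p (x + r α) (r β) = p (x + r α) (y + r β) from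
      (map_add _ _ _).symm,
      show p (y + r β) x + p (y + r β) (r α) = p (y + r β) (x + r α) from
      (map_add _ _ _).symm]
    rw [Prod.mk_sub_mk, Prod.mk_sub_mk, Prod.mk.injEq]
    constructor
    · exact lsa (x + r α) (y + r β) z
    · rw [← map_sub, ← map_sub, lsa]
  · intro u v
    obtain ⟨x, α⟩ := u
    obtain ⟨y, β⟩ := v
    rw [hd, hd, Prod.mk_sub_mk, Prod.mk.injEq]
    simp only [hc, hco, map_add, LinearMap.add_apply]
    constructor
    · rw [← comm x y]; abel
    · rw [← comm (r α) (r β), map_sub]; abel
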